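/- Let G₀ be a digraph and let (u₁,v₁),...,(u_k,v_k) be inserted edges, with G = G₀ ∪ {(u_i,v_i) : 1 ≤ i ≤ k}. Fix a vertex s and suppose T(w) is a reachability tree from w in G₀ (spanning all vertices reachable from w in G₀) for each w ∈ {s, v₁, ..., v_k}. Let H_s be the union of these trees together with the edges {(u_i,v_i) : 1 ≤ i ≤ k}. Then for every vertex v, there is an s → v path in G if and only if there is an s → v path in H_s. -/

import Mathlib

/-- `T` is a reachability tree from `w` in `E0`: an out-tree rooted at `w`, contained in
`E0`, whose vertex set is exactly the set of vertices reachable from `w` in `E0`. -/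
def IsReachTree {V : Type*} (E0 : V → V → Prop) (w : V) (T : V → V → Prop) : Prop :=
  (∀ x y, T x y → E0 x y) ∧
  (∀ x, ¬ T x w) ∧
  (∀ y, Relation.ReflTransGen E0 w y → y ≠ w → ∃! x, T x y) ∧
  (∀ x y, T x y → Relation.ReflTransGen E0 w x ∧ Relation.ReflTransGen E0 w y) ∧
  (∀ y, Relation.ReflTransGen E0 w y → Relation.ReflTransGen T w y)

/-- with `G = G₀ ∪ {(eu i, ev i)}`, and `Hs` the union of reachability
trees (in `G₀`) from `s` and from each inserted head `ev i`, together with the inserted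
edges, reachability from `s` in `G` coincides with reachability from `s` in `Hs`. -/
theorem union_of_trees_preserves_reachability
    {V : Type*} (E0 : V → V → Prop) (k : ℕ) (eu ev : Fin k → V) (s : V)
    (Tr : V → (V → V → Prop))
    (hTr : ∀ w, w ∈ insert s (Set.range ev) → IsReachTree E0 w (Tr w))
    (G Hs : V → V → Prop)
    (hG : ∀ x y, G x y ↔ (E0 x y ∨ ∃ i : Fin k, eu i = x ∧ ev i = y))
    (hHs : ∀ x y, Hs x y ↔
      ((Tr s x y ∨ ∃ i : Fin k, Tr (ev i) x y) ∨ ∃ i : Fin k, eu i = x ∧ ev i = y)) :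
    ∀ v : V, Relation.ReflTransGen G s v ↔ Relation.ReflTransGen Hs s v := by
  have hsub : ∀ w, w ∈ insert s (Set.range ev) → ∀ x y, Tr w x y → Hs x y := by
    intro w hw x y hxy
    rcases hw with rfl | ⟨i, rfl⟩
    · exact (hHs x y).2 (Or.inl (Or.inl hxy))
    · exact (hHs x y).2 (Or.inl (Or.inr ⟨i, hxy⟩))
  have key : ∀ v, Relation.ReflTransGen G s v →
      ∃ w ∈ insert s (Set.range ev),
        Relation.ReflTransGen Hs s w ∧ Relation.ReflTransGen E0 w v := by
    intro v hv
    induction hv with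
    | refl => exact ⟨s, Set.mem_insert _ _, .refl, .refl⟩
    | tail hb hbc ih =>
      obtain ⟨w, hw, hsw, hwb⟩ := ih
      rcases (hG _ _).1 hbc with h0 | ⟨i, rfl, rfl⟩
      · exact ⟨w, hw, hsw, hwb.tail h0⟩
      · refine ⟨ev i, Set.mem_insert_iff.2 (Or.inr ⟨i, rfl⟩), ?_, .refl⟩
        have hTb : Relation.ReflTransGen Hs w _ :=
          Relation.ReflTransGen.mono (hsub w hw) _ _ ((hTr w hw).2.2.2.2 _ hwb)
        exact (hsw.trans hTb).tail ((hHs _ _).2 (Or.inr ⟨i, rfl, rfl⟩))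
  intro v
  constructor
  · intro hv
    obtain ⟨w, hw, hsw, hwv⟩ := key v hv
    exact hsw.trans (Relation.ReflTransGen.mono (hsub w hw) _ _ ((hTr w hw).2.2.2.2 _ hwv))
  · intro hv
    refine Relation.ReflTransGen.mono ?_ _ _ hv
    intro x y hxy
    rcases (hHs x y).1 hxy with (h | ⟨i, h⟩) | ⟨i, hx, hy⟩
    · exact (hG x y).2 (Or.inl ((hTr s (Set.mem_insert _ _)).1 x y h))
    · exact (hG x y).2
        (Or.inl ((hTr (ev i) (Set.mem_insert_iff.2 (Or.inr ⟨i, rfl⟩))).1 x y h))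
    · exact (hG x y).2 (Or.inr ⟨i, hx, hy⟩)
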